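/- Let D be a pseudo-tensor category, p : V → U an epimorphism, and u : U → 𝟙 a morphism. If u ∘ p has the property that V ⊗ V ⇉ V → 𝟙 is a coequaliser, then U ⊗ U ⇉ U → 𝟙 is a coequaliser. -/

import Mathlib

open CategoryTheory MonoidalCategory CategoryTheory.Limits

universe v u

/-- For any morphism `w : W ⟶ 𝟙` in a monoidal category, the two composites
`W ⊗ W ⟶ W ⟶ 𝟙` agree; this is the compatibility condition for the cofork below. -/
theorem toUnit_cofork_condition {D : Type u} [Category.{v} D]
    [MonoidalCategory D] {W : D} (w : W ⟶ 𝟙_ D) :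
    ((w ▷ W) ≫ (λ_ W).hom) ≫ w = ((W ◁ w) ≫ (ρ_ W).hom) ≫ w := by
  rw [Category.assoc, Category.assoc, ← MonoidalCategory.leftUnitor_naturality,
    ← MonoidalCategory.rightUnitor_naturality, ← Category.assoc, ← Category.assoc,
    ← MonoidalCategory.whisker_exchange, MonoidalCategory.unitors_equal]

/-- Let `D` be a pseudo-tensor category over `k` (a `k`-linear rigid monoidal idempotent
complete additive category with `End 𝟙 = k`), `p : V ⟶ U` an epimorphism and `u : U ⟶ 𝟙` a
morphism.  If `V ⊗ V ⇉ V ⟶ 𝟙` (for `u ∘ p`) is a coequaliser, then `U ⊗ U ⇉ U ⟶ 𝟙`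
(for `u`) is a coequaliser. -/
theorem coequalizer_of_comp_coequalizer
    {k : Type*} [Field k]
    {D : Type u} [Category.{v} D] [Preadditive D] [Linear k D]
    [MonoidalCategory D] [MonoidalPreadditive D] [MonoidalLinear k D] [RigidCategory D]
    [IsIdempotentComplete D]
    (hunit : Function.Bijective fun a : k => a • (𝟙 (𝟙_ D)))
    {V U : D} (p : V ⟶ U) [Epi p] (u : U ⟶ 𝟙_ D)
    (h : Nonempty (IsColimit (Cofork.ofπ (p ≫ u) (toUnit_cofork_condition (p ≫ u))))) :
    Nonempty (IsColimit (Cofork.ofπ u (toUnit_cofork_condition u))) := by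

  obtain ⟨hc⟩ := h
  have hlam : ((p ≫ u) ▷ V) ≫ (λ_ V).hom ≫ p = (p ⊗ₘ p) ≫ (u ▷ U) ≫ (λ_ U).hom := by
    rw [← leftUnitor_naturality]
    simp only [← Category.assoc]
    rw [← MonoidalCategory.tensorHom_def]
    congr 1
    rw [← tensorHom_id, tensorHom_comp_tensorHom, Category.comp_id]
  have hrho : (V ◁ (p ≫ u)) ≫ (ρ_ V).hom ≫ p = (p ⊗ₘ p) ≫ (U ◁ u) ≫ (ρ_ U).hom := by
    rw [← rightUnitor_naturality]
    simp only [← Category.assoc]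
    rw [← tensorHom_def']
    congr 1
    rw [← id_tensorHom, tensorHom_comp_tensorHom, Category.comp_id]
  have hepi : Epi u := by
    constructor
    intro T a b hab
    exact Cofork.IsColimit.hom_ext hc (by simpa using congrArg (fun x => p ≫ x) hab)
  have hcond : ∀ s : Cofork ((u ▷ U) ≫ (λ_ U).hom) ((U ◁ u) ≫ (ρ_ U).hom),
      (((p ≫ u) ▷ V) ≫ (λ_ V).hom) ≫ p ≫ s.π = ((V ◁ (p ≫ u)) ≫ (ρ_ V).hom) ≫ p ≫ s.π := by
    intro s
    have hs := s.condition
    calc (((p ≫ u) ▷ V) ≫ (λ_ V).hom) ≫ p ≫ s.π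
        = (p ⊗ₘ p) ≫ (((u ▷ U) ≫ (λ_ U).hom) ≫ s.π) := by
          simp only [Category.assoc] at hlam ⊢; rw [reassoc_of% hlam]
      _ = (p ⊗ₘ p) ≫ (((U ◁ u) ≫ (ρ_ U).hom) ≫ s.π) := by rw [hs]
      _ = ((V ◁ (p ≫ u)) ≫ (ρ_ V).hom) ≫ p ≫ s.π := by
          simp only [Category.assoc] at hrho ⊢; rw [reassoc_of% hrho]
  refine ⟨Cofork.IsColimit.mk _ (fun s => hc.desc (Cofork.ofπ (p ≫ s.π) (hcond s)))
    (fun s => ?_) (fun s m hm => ?_)⟩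
  · have hf := hc.fac (Cofork.ofπ (p ≫ s.π) (hcond s)) .one
    simp only [Cofork.ofπ_pt, Cofork.π_ofπ, Cofork.ofπ_ι_app] at hf
    rw [← cancel_epi p, ← Category.assoc]
    exact hf
  · have hf := hc.fac (Cofork.ofπ (p ≫ s.π) (hcond s)) .one
    simp only [Cofork.ofπ_pt, Cofork.π_ofπ, Cofork.ofπ_ι_app] at hf
    simp only [Cofork.π_ofπ] at hm
    rw [← cancel_epi u, hm, ← cancel_epi p, ← Category.assoc]
    exact hf.symm
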